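/- Let n ≥ 1 be a natural number, let c > 0 and let τ be a real number with 0 < √c · τ < π/2. Let κ : Fin n → ℝ satisfy ∑ᵢ κᵢ ≥ 0 and (1/√c) · tan(√c · τ) · κᵢ < 1 for every i. Then ∑ᵢ (κᵢ + √c · tan(√c · τ)) / (1 − (1/√c) · tan(√c · τ) · κᵢ) > 0. -/
import Mathlib


/-- Analytic core of the third step of Lemma 2.1.1: parallel hypersurfaces of a
mean-convex hypersurface are strictly mean-convex. -/
theorem parallel_strictly_mean_convex
    (n : ℕ) (hn : 1 ≤ n) (c τ : ℝ) (hc : 0 < c)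
    (hτ0 : 0 < Real.sqrt c * τ) (hτ1 : Real.sqrt c * τ < Real.pi / 2)
    (κ : Fin n → ℝ) (hsum : 0 ≤ ∑ i, κ i)
    (hden : ∀ i, (1 / Real.sqrt c) * Real.tan (Real.sqrt c * τ) * κ i < 1) :
    0 < ∑ i, (κ i + Real.sqrt c * Real.tan (Real.sqrt c * τ)) /
        (1 - (1 / Real.sqrt c) * Real.tan (Real.sqrt c * τ) * κ i) := by
  set s := Real.sqrt c with hs
  set t := Real.tan (s * τ) with ht
  have hs0 : 0 < s := Real.sqrt_pos.mpr hc
  have ht0 : 0 < t := Real.tan_pos_of_pos_of_lt_pi_div_two hτ0 hτ1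
  have hsinv : s * (1 / s) = 1 := by field_simp
  -- pointwise tangent-line bound
  have key : ∀ i, s * t + (1 + t ^ 2) * κ i ≤
      (κ i + s * t) / (1 - (1 / s) * t * κ i) := by
    intro i
    have hd : 0 < 1 - (1 / s) * t * κ i := by linarith [hden i]
    rw [le_div_iff₀ hd]
    have hexp : (s * t + (1 + t ^ 2) * κ i) * (1 - 1 / s * t * κ i)
        = κ i + s * t - (1 + t ^ 2) * ((1 / s) * t * κ i ^ 2) := by
      field_simp
      ring
    have hnn : 0 ≤ (1 + t ^ 2) * ((1 / s) * t * κ i ^ 2) := by positivity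
    linarith
  calc (0 : ℝ) < ∑ i, (s * t + (1 + t ^ 2) * κ i) := by
        rw [Finset.sum_add_distrib, Finset.sum_const, ← Finset.mul_sum,
          Finset.card_univ, Fintype.card_fin, nsmul_eq_mul]
        have hn' : (0 : ℝ) < (n : ℝ) := by exact_mod_cast Nat.lt_of_lt_of_le Nat.zero_lt_one hn
        have h1 : (0 : ℝ) < (n : ℝ) * (s * t) := by positivity
        have h2 : (0 : ℝ) ≤ (1 + t ^ 2) * ∑ i, κ i := by positivity
        linarith
    _ ≤ _ := Finset.sum_le_sum fun i _ => key i
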